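/- arXiv:2311.13423 — 2 statements merged into one kernel-verified Lean document; each statement's English description precedes it below -/
import Mathlib

section
/- Let N ≥ 2, let 1 ≤ r < N, and let α_j > 1 for j = r+1, …, N. Let Z ⊆ ℝ^{N−1} be a bounded set of parameters z = (z₂,…,z_N), and let g_j : (0,1] × Z → ℝ (j = 2,…,N) be bounded functions such that sup_{z ∈ Z} |g_j(t,z)| → 0 as t → 0⁺ for each j. For z ∈ Z define γ_z(t) := (t, t z₂(1+g₂(t,z)), …, t z_r(1+g_r(t,z)), t^{α_{r+1}} z_{r+1}(1+g_{r+1}(t,z)), …, t^{α_N} z_N(1+g_N(t,z))), and set Y := {γ_z(t) : z ∈ Z, t ∈ (0,1]} ⊆ ℝ^N. Then the tangent cone of Y at the origin satisfies tangentConeAt ℝ Y 0 ⊆ Span(e₁, …, e_r), the linear span of the first r standard basis vectors. -/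
open Filter Topology

lemma abs_coord_le_norm {N : ℕ} (z : EuclideanSpace ℝ (Fin N)) (i : Fin N) :
    |z i| ≤ ‖z‖ := by
  rw [EuclideanSpace.norm_eq, ← Real.sqrt_sq_eq_abs]
  apply Real.sqrt_le_sqrt
  have : ∀ j ∈ Finset.univ, (0:ℝ) ≤ ‖z j‖ ^ 2 := fun j _ => sq_nonneg _
  simpa [Real.norm_eq_abs, sq_abs] using
    Finset.single_le_sum (f := fun j => ‖z j‖ ^ 2) this (Finset.mem_univ i)

theorem stmt7 (N r : ℕ) (hN : 2 ≤ N) (hr : 1 ≤ r) (hrN : r < N)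
    (α : Fin N → ℝ) (hα : ∀ i : Fin N, r ≤ i.val → 1 < α i)
    (Z : Set (EuclideanSpace ℝ (Fin N))) (hZ : Bornology.IsBounded Z)
    (g : Fin N → ℝ → EuclideanSpace ℝ (Fin N) → ℝ)
    (hgbdd : ∃ C : ℝ, ∀ i : Fin N, 1 ≤ i.val → ∀ t ∈ Set.Ioc (0 : ℝ) 1, ∀ z ∈ Z,
      |g i t z| ≤ C)
    (hg : ∀ i : Fin N, 1 ≤ i.val → ∀ ε > (0 : ℝ), ∃ δ > (0 : ℝ),
      ∀ t ∈ Set.Ioc (0 : ℝ) 1, t < δ → ∀ z ∈ Z, |g i t z| < ε) :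
    tangentConeAt ℝ
      {x : EuclideanSpace ℝ (Fin N) | ∃ z ∈ Z, ∃ t ∈ Set.Ioc (0 : ℝ) 1,
        ∀ i : Fin N, x i =
          if i.val = 0 then t
          else if i.val < r then t * z i * (1 + g i t z)
          else t ^ (α i) * z i * (1 + g i t z)} 0 ⊆
    ↑(Submodule.span ℝ {v : EuclideanSpace ℝ (Fin N) |
        ∃ j : Fin N, j.val < r ∧ v = EuclideanSpace.single j 1}) := by
  intro y hy
  obtain ⟨c, d, hd0, hd, hcd⟩ := mem_tangentConeAt_iff_exists_seq.mp hy
  rw [Filter.eventually_atTop] at hd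
  obtain ⟨n0, hn0⟩ := hd
  have hmem : ∀ n, n ≥ n0 → ∃ z ∈ Z, ∃ t ∈ Set.Ioc (0:ℝ) 1,
      ∀ i : Fin N, d n i =
        if i.val = 0 then t
        else if i.val < r then t * z i * (1 + g i t z)
        else t ^ (α i) * z i * (1 + g i t z) := by
    intro n hn
    have := hn0 n hn
    simpa [zero_add] using this
  choose! z hzZ t ht hform using hmem
  -- coordinate projections
  set i0 : Fin N := ⟨0, by omega⟩ with hi0
  have hd0 : Tendsto d atTop (𝓝 0) := hd0
  -- each coordinate of d tends to 0, and (c n • d n) i tends to y i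
  have hcoord : ∀ i : Fin N, Tendsto (fun n => d n i) atTop (𝓝 0) := by
    intro i
    have := ((EuclideanSpace.proj (𝕜 := ℝ) i).continuous.tendsto 0).comp hd0
    simpa [Function.comp_def] using this
  have hlim : ∀ i : Fin N, Tendsto (fun n => c n * d n i) atTop (𝓝 (y i)) := by
    intro i
    have := ((EuclideanSpace.proj (𝕜 := ℝ) i).continuous.tendsto y).comp hcd
    simpa [Function.comp_def] using this
  -- t tends to 0
  have htd : ∀ n ≥ n0, d n i0 = t n := by
    intro n hn
    have := hform n hn i0
    simpa [hi0] using this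
  have ht0 : Tendsto t atTop (𝓝 0) := by
    apply (hcoord i0).congr'
    filter_upwards [Filter.eventually_atTop.mpr ⟨n0, fun n hn => htd n hn⟩] with n h
    exact h
  -- c n * t n tends to y i0
  have hct : Tendsto (fun n => c n * t n) atTop (𝓝 (y i0)) := by
    apply (hlim i0).congr'
    filter_upwards [Filter.eventually_atTop.mpr ⟨n0, fun n hn => htd n hn⟩] with n h
    rw [h]
  -- bounds
  obtain ⟨C, hC⟩ := hgbdd
  obtain ⟨M, hM⟩ := isBounded_iff_forall_norm_le.mp hZ
  set B : ℝ := (|M| + 1) * (1 + |C| + 1) with hB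
  have hBpos : 0 < B := by positivity
  have hzb : ∀ n ≥ n0, ∀ i : Fin N, 1 ≤ i.val → |z n i * (1 + g i (t n) (z n))| ≤ B := by
    intro n hn i hi
    rw [abs_mul]
    have h1 : |z n i| ≤ |M| + 1 := by
      have := (abs_coord_le_norm (z n) i).trans (hM _ (hzZ n hn))
      have : |z n i| ≤ M := this
      nlinarith [abs_nonneg (z n i), le_abs_self M]
    have h2 : |1 + g i (t n) (z n)| ≤ 1 + |C| + 1 := by
      have := hC i hi (t n) (ht n hn) (z n) (hzZ n hn)
      have habs := abs_add_le (1:ℝ) (g i (t n) (z n))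
      have : |g i (t n) (z n)| ≤ |C| := this.trans (le_abs_self C)
      simp only [abs_one] at habs
      linarith
    have h1n : (0:ℝ) ≤ |z n i| := abs_nonneg _
    have h2n : (0:ℝ) ≤ |1 + g i (t n) (z n)| := abs_nonneg _
    calc |z n i| * |1 + g i (t n) (z n)| ≤ (|M| + 1) * (1 + |C| + 1) :=
      mul_le_mul h1 h2 h2n (by positivity)
    _ = B := rfl
  -- main claim: y i = 0 for r ≤ i
  have hy0 : ∀ i : Fin N, r ≤ i.val → y i = 0 := by
    intro i hi
    have hαi := hα i hi
    -- t n ^ (α i - 1) → 0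
    have hrp : Tendsto (fun n => t n ^ (α i - 1)) atTop (𝓝 0) := by
      have hcont : ContinuousAt (fun x : ℝ => x ^ (α i - 1)) 0 :=
        Real.continuousAt_rpow_const 0 (α i - 1) (Or.inr (by linarith))
      have := hcont.tendsto.comp ht0
      simpa [Function.comp_def, Real.zero_rpow (by linarith : α i - 1 ≠ 0)] using this
    -- bound
    have hbound : ∀ᶠ n in atTop, |c n * d n i| ≤ |c n * t n| * (t n ^ (α i - 1)) * B := by
      filter_upwards [Filter.eventually_atTop.mpr ⟨n0, fun n (hn : n ≥ n0) => hn⟩] with n hn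
      have htn := ht n hn
      have hform' := hform n hn i
      have hne : ¬ i.val = 0 := by omega
      have hnlt : ¬ i.val < r := by omega
      rw [hform']
      simp only [hne, hnlt, if_false]
      have hsplit : t n ^ (α i) = t n * t n ^ (α i - 1) := by
        nth_rewrite 1 [show α i = 1 + (α i - 1) by ring]
        rw [Real.rpow_add htn.1, Real.rpow_one]
      rw [hsplit]
      have : c n * (t n * t n ^ (α i - 1) * z n i * (1 + g i (t n) (z n))) =
          (c n * t n) * (t n ^ (α i - 1)) * (z n i * (1 + g i (t n) (z n))) := by ring
      rw [this, abs_mul, abs_mul]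
      have h1 : |t n ^ (α i - 1)| = t n ^ (α i - 1) :=
        abs_of_nonneg (Real.rpow_nonneg htn.1.le _)
      rw [h1]
      apply mul_le_mul_of_nonneg_left (hzb n hn i (by omega))
      exact mul_nonneg (abs_nonneg _) (Real.rpow_nonneg htn.1.le _)
    have hRHS : Tendsto (fun n => |c n * t n| * (t n ^ (α i - 1)) * B) atTop (𝓝 0) := by
      have := ((hct.abs.mul hrp).mul tendsto_const_nhds :
        Tendsto (fun n => |c n * t n| * (t n ^ (α i - 1)) * B) atTop (𝓝 (|y i0| * 0 * B)))
      simpa using this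
    have habs : Tendsto (fun n => |c n * d n i|) atTop (𝓝 0) :=
      squeeze_zero' (Filter.Eventually.of_forall fun n => abs_nonneg _) hbound hRHS
    have := (tendsto_zero_iff_abs_tendsto_zero _).mpr habs
    exact tendsto_nhds_unique (hlim i) this
  -- conclude membership in span
  have hdecomp : y = ∑ j : Fin N, y j • EuclideanSpace.single j (1:ℝ) := by
    ext i
    rw [show ((∑ j : Fin N, y j • EuclideanSpace.single j (1:ℝ)) i)
        = ∑ j : Fin N, (y j • EuclideanSpace.single j (1:ℝ)) i from
      by rw [WithLp.ofLp_sum, Finset.sum_apply]]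
    simp [EuclideanSpace.single_apply, mul_comm]
  rw [hdecomp]
  apply Submodule.sum_mem
  intro j _
  by_cases hj : j.val < r
  · exact Submodule.smul_mem _ _ (Submodule.subset_span ⟨j, hj, rfl⟩)
  · rw [hy0 j (le_of_not_gt hj), zero_smul]
    exact Submodule.zero_mem _
end

section
/- Let k ≥ 2 be an integer and let Y := {(x,y,z) ∈ ℝ³ : x² + y² = z^{2k} and z ≥ 0} be the horn. Then the tangent cone of Y at the origin, in Mathlib's sense, equals the z-axis: tangentConeAt ℝ Y 0 = {(0,0,c) : c ∈ ℝ}. In particular the tangent cone has dimension 1, strictly less than the dimension 2 of Y, i.e. the horn is a thin set. -/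
open Filter Topology

lemma neg_mem_tcone {E : Type*} [NormedAddCommGroup E] [NormedSpace ℝ E]
    {s : Set E} {x v : E} (h : v ∈ tangentConeAt ℝ s x) :
    -v ∈ tangentConeAt ℝ s x := by
  obtain ⟨c, d, h2, h1, h3⟩ := mem_tangentConeAt_iff_exists_seq_norm_tendsto_atTop.mp h
  exact mem_tangentConeAt_iff_exists_seq_norm_tendsto_atTop.mpr ⟨fun n => -c n, d, by simpa using h2, h1, by simpa [neg_smul] using h3.neg⟩

lemma axis_mem (k : ℕ) (hk : 2 ≤ k) (c : ℝ) (hc : 0 ≤ c) :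
    ((0:ℝ), (0:ℝ), c) ∈ tangentConeAt ℝ
      {p : ℝ × ℝ × ℝ | p.1 ^ 2 + p.2.1 ^ 2 = p.2.2 ^ (2 * k) ∧ 0 ≤ p.2.2} 0 := by
  refine mem_tangentConeAt_iff_exists_seq_norm_tendsto_atTop.mpr ⟨fun n => (n:ℝ) + 1, fun n => ((c / ((n:ℝ)+1)) ^ k, 0, c / ((n:ℝ)+1)),
    ?_, ?_, ?_⟩
  swap
  · refine Eventually.of_forall fun n => ?_
    have hn : (0:ℝ) < (n:ℝ) + 1 := by positivity
    simp only [zero_add, Set.mem_setOf_eq]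
    constructor
    · rw [mul_comm, pow_mul]; ring
    · positivity
  · have : Tendsto (fun n : ℕ => (n:ℝ) + 1) atTop atTop :=
      tendsto_atTop_add_const_right _ 1 tendsto_natCast_atTop_atTop
    refine this.congr fun n => ?_
    rw [Real.norm_of_nonneg (by positivity)]
  · have hd0 : Tendsto (fun n : ℕ => c / ((n:ℝ)+1)) atTop (𝓝 0) := by
      have : Tendsto (fun n : ℕ => (n:ℝ) + 1) atTop atTop :=
        tendsto_atTop_add_const_right _ 1 tendsto_natCast_atTop_atTop
      have hinv : Tendsto (fun n : ℕ => (((n:ℝ)+1))⁻¹) atTop (𝓝 0) :=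
        this.inv_tendsto_atTop
      simpa [div_eq_mul_inv] using hinv.const_mul c
    have h1 : Tendsto (fun n : ℕ => ((n:ℝ)+1) * (c / ((n:ℝ)+1)) ^ k) atTop (𝓝 0) := by
      have heq : ∀ n : ℕ, ((n:ℝ)+1) * (c / ((n:ℝ)+1)) ^ k
          = c * (c / ((n:ℝ)+1)) ^ (k-1) := by
        intro n
        have hn : ((n:ℝ)+1) ≠ 0 := by positivity
        obtain ⟨m, rfl⟩ : ∃ m, k = m + 1 := ⟨k - 1, by omega⟩
        simp only [Nat.add_sub_cancel, pow_succ]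
        field_simp
      have : Tendsto (fun n : ℕ => c * (c / ((n:ℝ)+1)) ^ (k-1)) atTop (𝓝 (c * 0 ^ (k-1))) :=
        (hd0.pow (k-1)).const_mul c
      rw [zero_pow (by omega), mul_zero] at this
      exact this.congr fun n => (heq n).symm
    have h3 : Tendsto (fun n : ℕ => ((n:ℝ)+1) * (c / ((n:ℝ)+1))) atTop (𝓝 c) := by
      refine tendsto_const_nhds.congr fun n => ?_
      have hn : ((n:ℝ)+1) ≠ 0 := by positivity
      field_simp
    have : Tendsto (fun n : ℕ =>
        (((n:ℝ)+1) * (c / ((n:ℝ)+1)) ^ k, (0:ℝ), ((n:ℝ)+1) * (c / ((n:ℝ)+1))))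
        atTop (𝓝 ((0:ℝ), (0:ℝ), c)) :=
      h1.prodMk_nhds (tendsto_const_nhds.prodMk_nhds h3)
    refine this.congr fun n => ?_
    simp [Prod.smul_def, smul_eq_mul]

/-- For an integer `k ≥ 2`, the tangent cone at the origin (in
Mathlib's sense) of the horn `Y = {(x,y,z) ∈ ℝ³ : x² + y² = z^{2k}, z ≥ 0}`
equals the `z`-axis `{(0,0,c) : c ∈ ℝ}`; in particular the tangent cone is
1-dimensional while `Y` is 2-dimensional, i.e. the horn is a thin set. -/
theorem stmt13 (k : ℕ) (hk : 2 ≤ k) :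
    tangentConeAt ℝ
      {p : ℝ × ℝ × ℝ | p.1 ^ 2 + p.2.1 ^ 2 = p.2.2 ^ (2 * k) ∧ 0 ≤ p.2.2} 0
      = Set.range fun c : ℝ => ((0 : ℝ), (0 : ℝ), c) := by
  ext v
  constructor
  · intro hv; obtain ⟨c, d, hc, hmem, hcd⟩ := mem_tangentConeAt_iff_exists_seq_norm_tendsto_atTop.mp hv
    have hmem' : ∀ᶠ n in atTop,
        (d n).1 ^ 2 + (d n).2.1 ^ 2 = (d n).2.2 ^ (2*k) ∧ 0 ≤ (d n).2.2 := by
      simpa using hmem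
    -- component limits
    have h1 : Tendsto (fun n => c n * (d n).1) atTop (𝓝 v.1) := by
      have := (continuous_fst.tendsto v).comp hcd
      exact this.congr fun n => rfl
    have h2 : Tendsto (fun n => c n * (d n).2.1) atTop (𝓝 v.2.1) := by
      have := (continuous_fst.tendsto v.2).comp ((continuous_snd.tendsto v).comp hcd)
      exact this.congr fun n => rfl
    have h3 : Tendsto (fun n => c n * (d n).2.2) atTop (𝓝 v.2.2) := by
      have := (continuous_snd.tendsto v.2).comp ((continuous_snd.tendsto v).comp hcd)
      exact this.congr fun n => rfl
    -- the sum of squares of first two components tends to v.1^2+v.2.1^2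
    have hsum : Tendsto (fun n => (c n * (d n).1)^2 + (c n * (d n).2.1)^2) atTop
        (𝓝 (v.1^2 + v.2.1^2)) := (h1.pow 2).add (h2.pow 2)
    -- denominator to infinity
    have hden : Tendsto (fun n => (c n) ^ (2*k-2)) atTop atTop := by
      have habs : Tendsto (fun n => |c n|) atTop atTop := by
        simpa [Real.norm_eq_abs] using hc
      have := habs.comp (tendsto_id (α := ℕ))
      have hpow : Tendsto (fun n => |c n| ^ (2*k-2)) atTop atTop :=
        (tendsto_pow_atTop (by omega)).comp habs
      refine hpow.congr fun n => ?_
      have hev : Even (2*k-2) := ⟨k-1, by omega⟩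
      exact hev.pow_abs (c n)
    -- alternate expression tends to 0
    have hzero : Tendsto (fun n => (c n * (d n).2.2)^(2*k) / (c n)^(2*k-2)) atTop (𝓝 0) :=
      (h3.pow (2*k)).div_atTop hden
    -- eventual equality
    have heq : ∀ᶠ n in atTop, (c n * (d n).1)^2 + (c n * (d n).2.1)^2
        = (c n * (d n).2.2)^(2*k) / (c n)^(2*k-2) := by
      have hcne : ∀ᶠ n in atTop, c n ≠ 0 := by
        have := hc.eventually_gt_atTop 0
        filter_upwards [this] with n hn
        intro h; rw [h] at hn; simp at hn
      filter_upwards [hmem', hcne] with n ⟨hn1, _⟩ hn0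
      have hk2 : c n ^ (2*k) = c n ^ (2*k-2) * c n ^ 2 := by
        rw [← pow_add]; congr 1; omega
      rw [mul_pow, mul_pow, mul_pow, ← mul_add, hn1, hk2, mul_assoc,
        mul_div_cancel_left₀ _ (pow_ne_zero _ hn0)]
    have hsum0 : Tendsto (fun n => (c n * (d n).1)^2 + (c n * (d n).2.1)^2) atTop (𝓝 0) :=
      hzero.congr' (heq.mono fun n h => h.symm)
    have : v.1^2 + v.2.1^2 = 0 := tendsto_nhds_unique hsum hsum0
    have hv1 : v.1 = 0 := by nlinarith [sq_nonneg v.1, sq_nonneg v.2.1]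
    have hv2 : v.2.1 = 0 := by nlinarith [sq_nonneg v.1, sq_nonneg v.2.1]
    exact ⟨v.2.2, by simp [Prod.ext_iff, hv1, hv2]⟩
  · rintro ⟨c, rfl⟩
    rcases le_or_gt 0 c with h | h
    · exact axis_mem k hk c h
    · have := neg_mem_tcone (axis_mem k hk (-c) (by linarith))
      simpa using this
end
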